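/- Let ℐ be a finite set and let 𝒪₊ = ℂ[X^{a,n}]_{(a,n)∈𝖠} in the variables indexed by 𝖠 ⊆ ℐ×ℤ. Define Dℓ ⊆ D̃er 𝒪₊ to be the set of formal sums Σ_{(a,n)∈𝖠} P^{a,n}(X) D_{a,n} such that for some K ≥ 1, each P^{a,n} is a ℂ-linear combination of the variables X^{b,m} with n − K ≤ m ≤ n + K, and define Dw ⊆ D̃er 𝒪₊ to be the elements of bounded grade with widening gap. Then Dw + Dℓ is closed under the Lie bracket of D̃er 𝒪₊, with [Dℓ, Dℓ] ⊆ Dℓ, [Dℓ, Dw] ⊆ Dw, and [Dw, Dw] ⊆ Dw; i.e. Dw ⋊ Dℓ is a Lie subalgebra. -/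
import Mathlib


open MvPolynomial

variable {ι : Type*}

/-- The bracket of two (formal, possibly infinite) vector fields
`Σ P^{a,n} D_{a,n}` and `Σ Q^{b,m} D_{b,m}`, computed coefficient-wise. -/
noncomputable def derBracket (P Q : ι × ℤ → MvPolynomial (ι × ℤ) ℂ) :
    ι × ℤ → MvPolynomial (ι × ℤ) ℂ :=
  fun an => ∑ᶠ bm : ι × ℤ,
    (P bm * MvPolynomial.pderiv bm (Q an) - Q bm * MvPolynomial.pderiv bm (P an))

/-- Membership in `Dℓ`: there is `K ≥ 1` such that each coefficient `P^{a,n}`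
(`(a,n) ∈ 𝖠`) is a ℂ-linear combination of the variables `X^{b,m}` with
`(b,m) ∈ 𝖠` and `n − K ≤ m ≤ n + K`. -/
def IsLin (A : Set (ι × ℤ)) (P : ι × ℤ → MvPolynomial (ι × ℤ) ℂ) : Prop :=
  ∃ K : ℤ, 1 ≤ K ∧ ∀ an ∈ A, P an ∈ Submodule.span ℂ
    {q : MvPolynomial (ι × ℤ) ℂ | ∃ bm ∈ A,
      an.2 - K ≤ bm.2 ∧ bm.2 ≤ an.2 + K ∧ q = MvPolynomial.X bm}

/-- Widening gap (relative to the index set `𝖠`). -/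
def WideningGap (A : Set (ι × ℤ)) (P : ι × ℤ → MvPolynomial (ι × ℤ) ℂ) : Prop :=
  ∀ K : ℤ, 1 ≤ K →
    {n : ℤ | ¬ ∀ a : ι, (a, n) ∈ A →
      P (a, n) ∈ MvPolynomial.supported ℂ {bm | bm ∈ A ∧ bm.2 < n - K}}.Finite

/-- Bounded grade: assigning `X^{b,m}` grade `−m` and `D_{a,n}` grade `n`, all
monomials of `P^{a,n} D_{a,n}` have grade in `[−M, M]` for a uniform `M`. -/
def BoundedGrade (A : Set (ι × ℤ)) (P : ι × ℤ → MvPolynomial (ι × ℤ) ℂ) : Prop :=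
  ∃ M : ℤ, ∀ an ∈ A, ∀ d ∈ (P an).support,
    |an.2 - ∑ bm ∈ d.support, (d bm : ℤ) * bm.2| ≤ M

/-- Membership in `Dw`: bounded grade and widening gap. -/
def IsDw (A : Set (ι × ℤ)) (P : ι × ℤ → MvPolynomial (ι × ℤ) ℂ) : Prop :=
  BoundedGrade A P ∧ WideningGap A P

/-! ### Auxiliary material -/

/-- grade of a monomial -/
noncomputable def grd (d : (ι × ℤ) →₀ ℕ) : ℤ := d.sum fun cl k => (k : ℤ) * cl.2

lemma grd_eq (d : (ι × ℤ) →₀ ℕ) : (∑ bm ∈ d.support, (d bm : ℤ) * bm.2) = grd d := rfl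

lemma grd_add (d e : (ι × ℤ) →₀ ℕ) : grd (d + e) = grd d + grd e :=
  Finsupp.sum_add_index' (fun a => by simp) (fun a m n => by push_cast; ring)

lemma grd_single (cl : ι × ℤ) (k : ℕ) : grd (Finsupp.single cl k) = (k : ℤ) * cl.2 :=
  Finsupp.sum_single_index (by simp)

lemma grd_sub_single {e : (ι × ℤ) →₀ ℕ} {i : ι × ℤ} (h : e i ≠ 0) :
    grd (e - Finsupp.single i 1) = grd e - i.2 := by
  have hle : Finsupp.single i 1 ≤ e := by
    rw [Finsupp.single_le_iff]; omega
  have h1 : e - Finsupp.single i 1 + Finsupp.single i 1 = e := tsub_add_cancel_of_le hle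
  have h2 := grd_add (e - Finsupp.single i 1) (Finsupp.single i 1)
  rw [h1, grd_single] at h2
  omega

lemma support_pderiv_subset {q : MvPolynomial (ι × ℤ) ℂ} {i : ι × ℤ} {d : (ι × ℤ) →₀ ℕ}
    (hd : d ∈ (pderiv i q).support) :
    ∃ e ∈ q.support, e i ≠ 0 ∧ d = e - Finsupp.single i 1 := by
  classical
  rw [MvPolynomial.mem_support_iff] at hd
  by_contra h
  push_neg at h
  apply hd
  conv_lhs => rw [q.as_sum, map_sum]
  rw [MvPolynomial.coeff_sum]
  apply Finset.sum_eq_zero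
  intro e he
  rw [pderiv_monomial, coeff_monomial]
  split_ifs with hde
  · by_cases hei : e i = 0
    · simp [hei]
    · exact absurd hde.symm (h e he hei)
  · rfl

lemma mem_support_finsum {α : Type*} {f : α → MvPolynomial (ι × ℤ) ℂ} {d : (ι × ℤ) →₀ ℕ}
    (hd : d ∈ (∑ᶠ bm, f bm).support) : ∃ bm, d ∈ (f bm).support := by
  by_cases hf : (Function.support f).Finite
  · rw [finsum_eq_sum f hf, MvPolynomial.mem_support_iff] at hd
    by_contra h
    push_neg at h
    apply hd
    rw [MvPolynomial.coeff_sum]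
    exact Finset.sum_eq_zero fun bm _ => by
      have := h bm; rwa [MvPolynomial.notMem_support_iff] at this
  · rw [finsum_of_infinite_support hf] at hd; simp at hd

lemma finsum_mem_submodule {α M : Type*} [AddCommMonoid M] [Module ℂ M] {f : α → M}
    {p : Submodule ℂ M} (h : ∀ i, f i ∈ p) : ∑ᶠ i, f i ∈ p := by
  by_cases hf : (Function.support f).Finite
  · rw [finsum_eq_sum f hf]; exact Submodule.sum_mem _ fun i _ => h i
  · rw [finsum_of_infinite_support hf]; exact p.zero_mem

lemma pderiv_mem_supported {S : Set (ι × ℤ)} {q : MvPolynomial (ι × ℤ) ℂ}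
    (hq : q ∈ supported ℂ S) (i : ι × ℤ) : pderiv i q ∈ supported ℂ S := by
  rw [supported_eq_adjoin_X] at hq
  induction hq using Algebra.adjoin_induction with
  | mem x hx =>
    obtain ⟨cl, _, rfl⟩ := hx
    rcases eq_or_ne cl i with rfl | h
    · rw [pderiv_X_self]; exact one_mem _
    · rw [pderiv_X_of_ne h]; exact zero_mem _
  | algebraMap r =>
    rw [MvPolynomial.algebraMap_eq, pderiv_C]; exact zero_mem _
  | add x y hx hy ihx ihy => rw [map_add]; exact add_mem ihx ihy
  | mul x y hx hy ihx ihy =>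
    rw [pderiv_mul]
    rw [← supported_eq_adjoin_X] at hx hy
    exact add_mem (mul_mem ihx hy) (mul_mem hx ihy)

lemma pderiv_eq_zero_of_supported {S : Set (ι × ℤ)} {q : MvPolynomial (ι × ℤ) ℂ}
    (hq : q ∈ supported ℂ S) {i : ι × ℤ} (hi : i ∉ S) : pderiv i q = 0 :=
  pderiv_eq_zero_of_notMem_vars fun hv => hi (mem_supported.mp hq hv)

lemma mem_of_pderiv_ne_zero {S : Set (ι × ℤ)} {q : MvPolynomial (ι × ℤ) ℂ}
    (hq : q ∈ supported ℂ S) {i : ι × ℤ} (h : pderiv i q ≠ 0) : i ∈ S := by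
  by_contra hi; exact h (pderiv_eq_zero_of_supported hq hi)

lemma support_term_finite (R : ι × ℤ → MvPolynomial (ι × ℤ) ℂ) (q : MvPolynomial (ι × ℤ) ℂ) :
    (Function.support fun bm => R bm * pderiv bm q).Finite := by
  apply Set.Finite.subset q.vars.finite_toSet
  intro bm hbm
  rw [Function.mem_support] at hbm
  by_contra hv
  exact hbm (by rw [pderiv_eq_zero_of_notMem_vars (by simpa using hv), mul_zero])

lemma support_term2_finite (R S : ι × ℤ → MvPolynomial (ι × ℤ) ℂ) (q r : MvPolynomial (ι × ℤ) ℂ) :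
    (Function.support fun bm => R bm * pderiv bm q - S bm * pderiv bm r).Finite := by
  apply Set.Finite.subset ((support_term_finite R q).union (support_term_finite S r))
  intro bm hbm
  rw [Function.mem_support] at hbm
  by_contra hv
  simp only [Set.mem_union, Function.mem_support, not_or, not_not] at hv
  rw [hv.1, hv.2, sub_zero] at hbm
  exact hbm rfl

/-! ### Facts about the linear class -/

/-- The generating set of variables appearing in `IsLin`. -/
def WSet (A : Set (ι × ℤ)) (an : ι × ℤ) (K : ℤ) : Set (MvPolynomial (ι × ℤ) ℂ) :=
  {q : MvPolynomial (ι × ℤ) ℂ | ∃ bm ∈ A,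
    an.2 - K ≤ bm.2 ∧ bm.2 ≤ an.2 + K ∧ q = MvPolynomial.X bm}

lemma span_WSet_le_supported (A : Set (ι × ℤ)) (an : ι × ℤ) (K : ℤ) :
    Submodule.span ℂ (WSet A an K) ≤ Subalgebra.toSubmodule
      (supported ℂ {cl : ι × ℤ | cl ∈ A ∧ an.2 - K ≤ cl.2 ∧ cl.2 ≤ an.2 + K}) := by
  rw [Submodule.span_le]
  rintro q ⟨bm, hbmA, h1, h2, rfl⟩
  simp only [SetLike.mem_coe, Subalgebra.mem_toSubmodule]
  rw [mem_supported, vars_X]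
  intro cl hcl
  simp only [Finset.coe_singleton, Set.mem_singleton_iff] at hcl
  subst hcl
  exact ⟨hbmA, h1, h2⟩

lemma lin_mem_supported {A : Set (ι × ℤ)} {an : ι × ℤ} {K : ℤ}
    {q : MvPolynomial (ι × ℤ) ℂ} (hq : q ∈ Submodule.span ℂ (WSet A an K)) :
    q ∈ supported ℂ {cl : ι × ℤ | cl ∈ A ∧ an.2 - K ≤ cl.2 ∧ cl.2 ≤ an.2 + K} :=
  span_WSet_le_supported A an K hq

lemma lin_pderiv_constant {A : Set (ι × ℤ)} {an : ι × ℤ} {K : ℤ}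
    {q : MvPolynomial (ι × ℤ) ℂ} (hq : q ∈ Submodule.span ℂ (WSet A an K)) (i : ι × ℤ) :
    ∃ c : ℂ, pderiv i q = C c := by
  induction hq using Submodule.span_induction with
  | mem x hx =>
    obtain ⟨bm, _, _, _, rfl⟩ := hx
    rcases eq_or_ne bm i with rfl | h
    · exact ⟨1, by rw [pderiv_X_self]; simp⟩
    · exact ⟨0, by rw [pderiv_X_of_ne h]; simp⟩
  | zero => exact ⟨0, by simp⟩
  | add x y hx hy ihx ihy =>
    obtain ⟨c, hc⟩ := ihx; obtain ⟨c', hc'⟩ := ihy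
    exact ⟨c + c', by rw [map_add, hc, hc', map_add]⟩
  | smul a x hx ihx =>
    obtain ⟨c, hc⟩ := ihx
    exact ⟨a * c, by rw [Derivation.map_smul, hc, smul_eq_C_mul, ← C_mul]⟩

lemma lin_support_single {A : Set (ι × ℤ)} {an : ι × ℤ} {K : ℤ}
    {q : MvPolynomial (ι × ℤ) ℂ} (hq : q ∈ Submodule.span ℂ (WSet A an K)) :
    ∀ d ∈ q.support, ∃ cl : ι × ℤ, cl ∈ A ∧ an.2 - K ≤ cl.2 ∧ cl.2 ≤ an.2 + K ∧
      d = Finsupp.single cl 1 := by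
  classical
  induction hq using Submodule.span_induction with
  | mem x hx =>
    obtain ⟨bm, hbm, h1, h2, rfl⟩ := hx
    intro d hd
    rw [support_X] at hd
    simp only [Finset.mem_singleton] at hd
    exact ⟨bm, hbm, h1, h2, hd⟩
  | zero => intro d hd; simp at hd
  | add x y hx hy ihx ihy =>
    intro d hd
    rcases Finset.mem_union.mp (MvPolynomial.support_add hd) with h | h
    · exact ihx d h
    · exact ihy d h
  | smul a x hx ihx =>
    intro d hd
    exact ihx d (MvPolynomial.support_smul hd)

/-! ### Closure of the classes under sums and negation -/

section closure
variable {A : Set (ι × ℤ)} {P Q : ι × ℤ → MvPolynomial (ι × ℤ) ℂ}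

lemma isLin_congr (h : ∀ an ∈ A, P an = Q an) (hP : IsLin A P) : IsLin A Q := by
  obtain ⟨K, hK, hmem⟩ := hP
  exact ⟨K, hK, fun an han => h an han ▸ hmem an han⟩

lemma wideningGap_congr (h : ∀ an ∈ A, P an = Q an) (hP : WideningGap A P) :
    WideningGap A Q := by
  intro K hK
  apply (hP K hK).subset
  intro n hn
  simp only [Set.mem_setOf_eq] at hn ⊢
  intro hc
  exact hn fun a ha => h (a, n) ha ▸ hc a ha

lemma boundedGrade_congr (h : ∀ an ∈ A, P an = Q an) (hP : BoundedGrade A P) :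
    BoundedGrade A Q := by
  obtain ⟨M, hM⟩ := hP
  exact ⟨M, fun an han => h an han ▸ hM an han⟩

lemma isDw_congr (h : ∀ an ∈ A, P an = Q an) (hP : IsDw A P) : IsDw A Q :=
  ⟨boundedGrade_congr h hP.1, wideningGap_congr h hP.2⟩

lemma isLin_add (hP : IsLin A P) (hQ : IsLin A Q) : IsLin A (P + Q) := by
  obtain ⟨K₁, hK₁, h₁⟩ := hP
  obtain ⟨K₂, hK₂, h₂⟩ := hQ
  refine ⟨max K₁ K₂, le_max_of_le_left hK₁, fun an han => ?_⟩
  have mono : ∀ K K' : ℤ, K ≤ K' →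
      Submodule.span ℂ (WSet A an K) ≤ Submodule.span ℂ (WSet A an K') := by
    intro K K' hKK'
    apply Submodule.span_mono
    rintro q ⟨bm, hbm, hl, hr, rfl⟩
    exact ⟨bm, hbm, by omega, by omega, rfl⟩
  exact Submodule.add_mem _ (mono _ _ (le_max_left _ _) (h₁ an han))
    (mono _ _ (le_max_right _ _) (h₂ an han))

lemma isLin_neg (hP : IsLin A P) : IsLin A (-P) := by
  obtain ⟨K, hK, h⟩ := hP
  exact ⟨K, hK, fun an han => Submodule.neg_mem _ (h an han)⟩

lemma wideningGap_add (hP : WideningGap A P) (hQ : WideningGap A Q) :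
    WideningGap A (P + Q) := by
  intro K hK
  apply ((hP K hK).union (hQ K hK)).subset
  intro n hn
  simp only [Set.mem_setOf_eq, Set.mem_union] at hn ⊢
  by_contra hc
  push_neg at hc
  exact hn fun a ha => add_mem (hc.1 a ha) (hc.2 a ha)

lemma wideningGap_neg (hP : WideningGap A P) : WideningGap A (-P) := by
  intro K hK
  apply (hP K hK).subset
  intro n hn
  simp only [Set.mem_setOf_eq] at hn ⊢
  intro hc
  exact hn fun a ha => by
    have := neg_mem (hc a ha)
    simpa using this

lemma boundedGrade_add (hP : BoundedGrade A P) (hQ : BoundedGrade A Q) :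
    BoundedGrade A (P + Q) := by
  classical
  obtain ⟨M₁, h₁⟩ := hP
  obtain ⟨M₂, h₂⟩ := hQ
  refine ⟨max M₁ M₂, fun an han d hd => ?_⟩
  rcases Finset.mem_union.mp (MvPolynomial.support_add hd) with h | h
  · exact le_max_of_le_left (h₁ an han d h)
  · exact le_max_of_le_right (h₂ an han d h)

lemma boundedGrade_neg (hP : BoundedGrade A P) : BoundedGrade A (-P) := by
  obtain ⟨M, h⟩ := hP
  refine ⟨M, fun an han d hd => h an han d ?_⟩
  rwa [Pi.neg_apply, MvPolynomial.support_neg] at hd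

lemma isDw_add (hP : IsDw A P) (hQ : IsDw A Q) : IsDw A (P + Q) :=
  ⟨boundedGrade_add hP.1 hQ.1, wideningGap_add hP.2 hQ.2⟩

lemma isDw_neg (hP : IsDw A P) : IsDw A (-P) :=
  ⟨boundedGrade_neg hP.1, wideningGap_neg hP.2⟩

lemma wideningGap_sub (hP : WideningGap A P) (hQ : WideningGap A Q) :
    WideningGap A (P - Q) := by
  rw [sub_eq_add_neg]
  exact wideningGap_add hP (wideningGap_neg hQ)

lemma boundedGrade_of_isLin (hP : IsLin A P) : BoundedGrade A P := by
  obtain ⟨K, hK, h⟩ := hP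
  refine ⟨K, fun an han d hd => ?_⟩
  obtain ⟨cl, _, h1, h2, rfl⟩ := lin_support_single (h an han) d hd
  rw [grd_eq, grd_single]
  simp only [Nat.cast_one, one_mul]
  rw [abs_le]
  omega

end closure

/-! ### Decomposition of the bracket -/

/-- Half of the bracket: `Σ P^{b,m} ∂_{b,m} Q^{a,n}`. -/
noncomputable def brk1 (P Q : ι × ℤ → MvPolynomial (ι × ℤ) ℂ) :
    ι × ℤ → MvPolynomial (ι × ℤ) ℂ :=
  fun an => ∑ᶠ bm : ι × ℤ, P bm * MvPolynomial.pderiv bm (Q an)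

section bracket
variable (P Q P₁ P₂ Q₁ Q₂ : ι × ℤ → MvPolynomial (ι × ℤ) ℂ)

lemma derBracket_eq_sub : derBracket P Q = brk1 P Q - brk1 Q P := by
  funext an
  rw [Pi.sub_apply]
  exact finsum_sub_distrib (support_term_finite P (Q an)) (support_term_finite Q (P an))

lemma derBracket_add_left :
    derBracket (P₁ + P₂) Q = derBracket P₁ Q + derBracket P₂ Q := by
  funext an
  rw [Pi.add_apply]
  unfold derBracket
  rw [← finsum_add_distrib (support_term2_finite P₁ Q (Q an) (P₁ an))
    (support_term2_finite P₂ Q (Q an) (P₂ an))]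
  apply finsum_congr
  intro bm
  simp only [Pi.add_apply, map_add]
  ring

lemma derBracket_add_right :
    derBracket P (Q₁ + Q₂) = derBracket P Q₁ + derBracket P Q₂ := by
  funext an
  rw [Pi.add_apply]
  unfold derBracket
  rw [← finsum_add_distrib (support_term2_finite P Q₁ (Q₁ an) (P an))
    (support_term2_finite P Q₂ (Q₂ an) (P an))]
  apply finsum_congr
  intro bm
  simp only [Pi.add_apply, map_add]
  ring

end bracket

/-! ### The main closure lemmas -/

section main
variable {A : Set (ι × ℤ)} {P Q R S : ι × ℤ → MvPolynomial (ι × ℤ) ℂ}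

lemma lin_bracket (hPsupp : ∀ an, P an ∈ supported ℂ A)
    (hQsupp : ∀ an, Q an ∈ supported ℂ A)
    (hP : IsLin A P) (hQ : IsLin A Q) : IsLin A (derBracket P Q) := by
  obtain ⟨K₁, hK₁, h₁⟩ := hP
  obtain ⟨K₂, hK₂, h₂⟩ := hQ
  refine ⟨K₁ + K₂, by omega, fun an han => ?_⟩
  show (∑ᶠ bm : ι × ℤ, (P bm * pderiv bm (Q an) - Q bm * pderiv bm (P an))) ∈ _
  apply finsum_mem_submodule
  intro bm
  apply sub_mem
  · by_cases h0 : pderiv bm (Q an) = 0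
    · rw [h0, mul_zero]; exact zero_mem _
    · obtain ⟨hbmA, hb1, hb2⟩ :=
        mem_of_pderiv_ne_zero (lin_mem_supported (h₂ an han)) h0
      obtain ⟨c, hc⟩ := lin_pderiv_constant (h₂ an han) bm
      rw [hc, mul_comm, ← smul_eq_C_mul]
      apply Submodule.smul_mem
      refine Submodule.span_mono ?_ (h₁ bm hbmA)
      rintro q ⟨cl, hclA, hc1, hc2, rfl⟩
      exact ⟨cl, hclA, by omega, by omega, rfl⟩
  · by_cases h0 : pderiv bm (P an) = 0
    · rw [h0, mul_zero]; exact zero_mem _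
    · obtain ⟨hbmA, hb1, hb2⟩ :=
        mem_of_pderiv_ne_zero (lin_mem_supported (h₁ an han)) h0
      obtain ⟨c, hc⟩ := lin_pderiv_constant (h₁ an han) bm
      rw [hc, mul_comm, ← smul_eq_C_mul]
      apply Submodule.smul_mem
      refine Submodule.span_mono ?_ (h₂ bm hbmA)
      rintro q ⟨cl, hclA, hc1, hc2, rfl⟩
      exact ⟨cl, hclA, by omega, by omega, rfl⟩

lemma bg_term {M₁ M₂ : ℤ}
    (hQsupp : ∀ an, Q an ∈ supported ℂ A)
    (h₁ : ∀ an ∈ A, ∀ d ∈ (P an).support, |an.2 - grd d| ≤ M₁)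
    (h₂ : ∀ an ∈ A, ∀ d ∈ (Q an).support, |an.2 - grd d| ≤ M₂)
    {an bm : ι × ℤ} (han : an ∈ A) {d : (ι × ℤ) →₀ ℕ}
    (hd : d ∈ (P bm * pderiv bm (Q an)).support) :
    |an.2 - grd d| ≤ M₁ + M₂ := by
  classical
  have hne : pderiv bm (Q an) ≠ 0 := by
    intro h; rw [h, mul_zero] at hd; simp at hd
  have hbmA : bm ∈ A := mem_of_pderiv_ne_zero (hQsupp an) hne
  obtain ⟨e, he, f, hf, hd'⟩ := Finset.mem_add.mp (MvPolynomial.support_mul _ _ hd)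
  obtain ⟨e', he', hei, rfl⟩ := support_pderiv_subset hf
  have t1 := h₁ bm hbmA e he
  have t2 := h₂ an han e' he'
  rw [← hd', grd_add, grd_sub_single hei]
  rw [abs_le] at t1 t2 ⊢
  omega

lemma bg_bracket (hPsupp : ∀ an, P an ∈ supported ℂ A)
    (hQsupp : ∀ an, Q an ∈ supported ℂ A)
    (hP : BoundedGrade A P) (hQ : BoundedGrade A Q) :
    BoundedGrade A (derBracket P Q) := by
  classical
  obtain ⟨M₁, h₁⟩ := hP
  obtain ⟨M₂, h₂⟩ := hQ
  have h₁' : ∀ an ∈ A, ∀ d ∈ (P an).support, |an.2 - grd d| ≤ M₁ := by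
    intro an han d hd; rw [← grd_eq]; exact h₁ an han d hd
  have h₂' : ∀ an ∈ A, ∀ d ∈ (Q an).support, |an.2 - grd d| ≤ M₂ := by
    intro an han d hd; rw [← grd_eq]; exact h₂ an han d hd
  refine ⟨M₁ + M₂, fun an han d hd => ?_⟩
  rw [grd_eq]
  obtain ⟨bm, hbm⟩ := mem_support_finsum hd
  rcases Finset.mem_union.mp (Finset.mem_of_subset (MvPolynomial.support_sub _ _ _) hbm) with h | h
  · exact bg_term hQsupp h₁' h₂' han h
  · have := bg_term hPsupp h₂' h₁' han h
    omega

/-- A sufficient property on a "multiplier" family for the widening-gap estimate. -/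
def Mult (A : Set (ι × ℤ)) (P : ι × ℤ → MvPolynomial (ι × ℤ) ℂ) : Prop :=
  ∀ K : ℤ, 1 ≤ K → ∃ K' : ℤ, K ≤ K' ∧ ∃ T : Set ℤ, T.Finite ∧
    ∀ n : ℤ, n ∉ T → ∀ bm : ι × ℤ, bm ∈ A → bm.2 < n - K' →
      P bm ∈ supported ℂ {cl : ι × ℤ | cl ∈ A ∧ cl.2 < n - K}

lemma mult_of_lin (hP : IsLin A P) : Mult A P := by
  obtain ⟨K₀, hK₀, h⟩ := hP
  intro K hK
  refine ⟨K + K₀, by omega, ∅, Set.finite_empty, fun n _ bm hbmA hlt => ?_⟩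
  refine supported_mono ?_ (lin_mem_supported (h bm hbmA))
  rintro cl ⟨hclA, h1, h2⟩
  exact ⟨hclA, by omega⟩

lemma mult_of_gap [Fintype ι] (hPsupp : ∀ an, P an ∈ supported ℂ A)
    (hP : WideningGap A P) : Mult A P := by
  intro K hK
  have hS := hP K hK
  refine ⟨K, le_refl K,
    ⋃ bm ∈ ((Set.univ : Set ι) ×ˢ {n : ℤ | ¬ ∀ a : ι, (a, n) ∈ A →
        P (a, n) ∈ supported ℂ {cl : ι × ℤ | cl ∈ A ∧ cl.2 < n - K}}),
      ⋃ cl ∈ (P bm).vars, Set.Ioc (bm.2 + K) (cl.2 + K), ?_, ?_⟩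
  · apply Set.Finite.biUnion (Set.finite_univ.prod hS)
    intro bm _
    apply Set.Finite.biUnion (P bm).vars.finite_toSet
    intro cl _
    exact Set.finite_Ioc _ _
  · intro n hn bm hbmA hlt
    by_cases hbS : bm.2 ∈ {n : ℤ | ¬ ∀ a : ι, (a, n) ∈ A →
        P (a, n) ∈ supported ℂ {cl : ι × ℤ | cl ∈ A ∧ cl.2 < n - K}}
    · rw [mem_supported]
      intro cl hcl
      have hclA : cl ∈ A := mem_supported.mp (hPsupp bm) hcl
      refine ⟨hclA, ?_⟩
      by_contra hcl2
      push_neg at hcl2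
      apply hn
      refine Set.mem_biUnion (show bm ∈ _ from Set.mk_mem_prod (Set.mem_univ _) hbS) ?_
      simp only [Set.mem_iUnion]
      exact ⟨cl, hcl, by constructor <;> omega⟩
    · rw [Set.mem_setOf_eq, not_not] at hbS
      have hgood := hbS bm.1 (by rwa [Prod.mk.eta])
      rw [Prod.mk.eta] at hgood
      refine supported_mono ?_ hgood
      rintro cl ⟨hclA, hcl⟩
      exact ⟨hclA, by omega⟩

lemma gap_brk1 (hP : Mult A P) (hQ : WideningGap A Q) :
    WideningGap A (brk1 P Q) := by
  intro K hK
  obtain ⟨K', hKK', T, hT, hmult⟩ := hP K hK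
  have hK' : 1 ≤ K' := le_trans hK hKK'
  apply (hT.union (hQ K' hK')).subset
  intro n hn
  rw [Set.mem_union]
  by_contra hc
  push_neg at hc
  obtain ⟨hnT, hnS⟩ := hc
  simp only [Set.mem_setOf_eq] at hn
  apply hn
  intro a ha
  have hQgood : Q (a, n) ∈ supported ℂ {cl : ι × ℤ | cl ∈ A ∧ cl.2 < n - K'} := by
    by_contra hbad
    exact hnS ⟨a, ha, hbad⟩
  show (∑ᶠ bm : ι × ℤ, P bm * pderiv bm (Q (a, n))) ∈ _
  rw [← Subalgebra.mem_toSubmodule]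
  apply finsum_mem_submodule
  intro bm
  rw [Subalgebra.mem_toSubmodule]
  by_cases h0 : pderiv bm (Q (a, n)) = 0
  · rw [h0, mul_zero]; exact zero_mem _
  · obtain ⟨hbmA, hbmlt⟩ := mem_of_pderiv_ne_zero hQgood h0
    refine mul_mem (hmult n hnT bm hbmA hbmlt)
      (supported_mono ?_ (pderiv_mem_supported hQgood bm))
    rintro cl ⟨hclA, hcl⟩
    exact ⟨hclA, by omega⟩

lemma gap_brk2 (hR : WideningGap A R) (hS : IsLin A S) :
    WideningGap A (brk1 R S) := by
  obtain ⟨K₀, hK₀, hlin⟩ := hS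
  intro K hK
  have hK₂ : (1 : ℤ) ≤ K + K₀ := by omega
  have hSbad := hR (K + K₀) hK₂
  apply (hSbad.biUnion (fun m _ => Set.finite_Icc (m - K₀) (m + K₀))).subset
  intro n hn
  simp only [Set.mem_setOf_eq] at hn
  by_contra hc
  apply hn
  intro a ha
  show (∑ᶠ bm : ι × ℤ, R bm * pderiv bm (S (a, n))) ∈ _
  rw [← Subalgebra.mem_toSubmodule]
  apply finsum_mem_submodule
  intro bm
  rw [Subalgebra.mem_toSubmodule]
  by_cases h0 : pderiv bm (S (a, n)) = 0
  · rw [h0, mul_zero]; exact zero_mem _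
  · obtain ⟨hbmA, hb1, hb2⟩ :=
      mem_of_pderiv_ne_zero (lin_mem_supported (hlin (a, n) ha)) h0
    have hb1' : n - K₀ ≤ bm.2 := hb1
    have hb2' : bm.2 ≤ n + K₀ := hb2
    obtain ⟨c, hc'⟩ := lin_pderiv_constant (hlin (a, n) ha) bm
    have hbmS : bm.2 ∉ {m : ℤ | ¬ ∀ a : ι, (a, m) ∈ A →
        R (a, m) ∈ supported ℂ {cl : ι × ℤ | cl ∈ A ∧ cl.2 < m - (K + K₀)}} := by
      intro hmem
      exact hc (Set.mem_biUnion hmem (by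
        simp only [Set.mem_Icc]
        constructor <;> omega))
    rw [Set.mem_setOf_eq, not_not] at hbmS
    have hRgood := hbmS bm.1 (by rwa [Prod.mk.eta])
    rw [Prod.mk.eta] at hRgood
    rw [hc']
    apply mul_mem
    · refine supported_mono ?_ hRgood
      rintro cl ⟨hclA, hcl⟩
      exact ⟨hclA, by omega⟩
    · rw [mem_supported, vars_C]
      simp

lemma dw_bracket [Fintype ι] (hPsupp : ∀ an, P an ∈ supported ℂ A)
    (hQsupp : ∀ an, Q an ∈ supported ℂ A)
    (hP : IsDw A P) (hQ : IsDw A Q) : IsDw A (derBracket P Q) := by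
  refine ⟨bg_bracket hPsupp hQsupp hP.1 hQ.1, ?_⟩
  rw [derBracket_eq_sub]
  exact wideningGap_sub (gap_brk1 (mult_of_gap hPsupp hP.2) hQ.2)
    (gap_brk1 (mult_of_gap hQsupp hQ.2) hP.2)

lemma lin_dw_bracket (hPsupp : ∀ an, P an ∈ supported ℂ A)
    (hQsupp : ∀ an, Q an ∈ supported ℂ A)
    (hP : IsLin A P) (hQ : IsDw A Q) : IsDw A (derBracket P Q) := by
  refine ⟨bg_bracket hPsupp hQsupp (boundedGrade_of_isLin hP) hQ.1, ?_⟩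
  rw [derBracket_eq_sub]
  exact wideningGap_sub (gap_brk1 (mult_of_lin hP) hQ.2) (gap_brk2 hQ.2 hP)

lemma dw_lin_bracket (hPsupp : ∀ an, P an ∈ supported ℂ A)
    (hQsupp : ∀ an, Q an ∈ supported ℂ A)
    (hP : IsDw A P) (hQ : IsLin A Q) : IsDw A (derBracket P Q) := by
  refine ⟨bg_bracket hPsupp hQsupp hP.1 (boundedGrade_of_isLin hQ), ?_⟩
  rw [derBracket_eq_sub]
  exact wideningGap_sub (gap_brk2 hP.2 hQ) (gap_brk1 (mult_of_lin hQ) hP.2)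

end main

/-- `Dw ⋊ Dℓ` is a Lie subalgebra of `D̃er 𝒪₊`:
`[Dℓ, Dℓ] ⊆ Dℓ`, `[Dℓ, Dw] ⊆ Dw`, `[Dw, Dℓ] ⊆ Dw` and `[Dw, Dw] ⊆ Dw`,
so `Dw + Dℓ` is closed under the bracket. -/
theorem stmt17 [Fintype ι] (A : Set (ι × ℤ))
    (hA : ∀ a : ι, ∀ n : ℤ, 1 ≤ n → (a, n) ∈ A)
    (P Q : ι × ℤ → MvPolynomial (ι × ℤ) ℂ)
    (hP0 : ∀ an ∉ A, P an = 0) (hPsupp : ∀ an, P an ∈ MvPolynomial.supported ℂ A)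
    (hQ0 : ∀ an ∉ A, Q an = 0) (hQsupp : ∀ an, Q an ∈ MvPolynomial.supported ℂ A) :
    (IsLin A P → IsLin A Q → IsLin A (derBracket P Q)) ∧
    (IsLin A P → IsDw A Q → IsDw A (derBracket P Q)) ∧
    (IsDw A P → IsLin A Q → IsDw A (derBracket P Q)) ∧
    (IsDw A P → IsDw A Q → IsDw A (derBracket P Q)) ∧
    (∀ P₁ P₂ Q₁ Q₂ : ι × ℤ → MvPolynomial (ι × ℤ) ℂ,
      P = P₁ + P₂ → Q = Q₁ + Q₂ →
      IsDw A P₁ → IsLin A P₂ → IsDw A Q₁ → IsLin A Q₂ →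
      ∃ R₁ R₂ : ι × ℤ → MvPolynomial (ι × ℤ) ℂ,
        derBracket P Q = R₁ + R₂ ∧ IsDw A R₁ ∧ IsLin A R₂) := by
  refine ⟨fun hP hQ => lin_bracket hPsupp hQsupp hP hQ,
    fun hP hQ => lin_dw_bracket hPsupp hQsupp hP hQ,
    fun hP hQ => dw_lin_bracket hPsupp hQsupp hP hQ,
    fun hP hQ => dw_bracket hPsupp hQsupp hP hQ, ?_⟩
  intro P₁ P₂ Q₁ Q₂ hPeq hQeq hP₁ hP₂ hQ₁ hQ₂
  classical
  set P₂' : ι × ℤ → MvPolynomial (ι × ℤ) ℂ := fun an => if an ∈ A then P₂ an else 0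
    with hP₂'def
  set Q₂' : ι × ℤ → MvPolynomial (ι × ℤ) ℂ := fun an => if an ∈ A then Q₂ an else 0
    with hQ₂'def
  set P₁' := P - P₂' with hP₁'def
  set Q₁' := Q - Q₂' with hQ₁'def
  have hP₂'lin : IsLin A P₂' := isLin_congr (fun an han => by simp [hP₂'def, han]) hP₂
  have hQ₂'lin : IsLin A Q₂' := isLin_congr (fun an han => by simp [hQ₂'def, han]) hQ₂
  have hP₂'supp : ∀ an, P₂' an ∈ supported ℂ A := fun an => by
    by_cases h : an ∈ A
    · obtain ⟨K, hK, hh⟩ := hP₂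
      simp only [hP₂'def, if_pos h]
      exact supported_mono (fun cl hcl => hcl.1) (lin_mem_supported (hh an h))
    · simp only [hP₂'def, if_neg h]
      exact zero_mem _
  have hQ₂'supp : ∀ an, Q₂' an ∈ supported ℂ A := fun an => by
    by_cases h : an ∈ A
    · obtain ⟨K, hK, hh⟩ := hQ₂
      simp only [hQ₂'def, if_pos h]
      exact supported_mono (fun cl hcl => hcl.1) (lin_mem_supported (hh an h))
    · simp only [hQ₂'def, if_neg h]
      exact zero_mem _
  have hP₁'supp : ∀ an, P₁' an ∈ supported ℂ A := fun an => by
    rw [hP₁'def, Pi.sub_apply]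
    exact sub_mem (hPsupp an) (hP₂'supp an)
  have hQ₁'supp : ∀ an, Q₁' an ∈ supported ℂ A := fun an => by
    rw [hQ₁'def, Pi.sub_apply]
    exact sub_mem (hQsupp an) (hQ₂'supp an)
  have hP₁'dw : IsDw A P₁' := by
    refine isDw_congr (fun an han => ?_) hP₁
    rw [hP₁'def, Pi.sub_apply, hP₂'def]
    simp only [if_pos han, hPeq, Pi.add_apply]
    ring
  have hQ₁'dw : IsDw A Q₁' := by
    refine isDw_congr (fun an han => ?_) hQ₁
    rw [hQ₁'def, Pi.sub_apply, hQ₂'def]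
    simp only [if_pos han, hQeq, Pi.add_apply]
    ring
  have hPsplit : P = P₁' + P₂' := by
    funext an
    rw [Pi.add_apply, hP₁'def, Pi.sub_apply]
    ring
  have hQsplit : Q = Q₁' + Q₂' := by
    funext an
    rw [Pi.add_apply, hQ₁'def, Pi.sub_apply]
    ring
  refine ⟨derBracket P₁' Q₁' + derBracket P₁' Q₂' + derBracket P₂' Q₁',
    derBracket P₂' Q₂', ?_, ?_, ?_⟩
  · conv_lhs => rw [hPsplit, hQsplit]
    rw [derBracket_add_left, derBracket_add_right, derBracket_add_right]
    ring
  · exact isDw_add (isDw_add (dw_bracket hP₁'supp hQ₁'supp hP₁'dw hQ₁'dw)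
      (dw_lin_bracket hP₁'supp hQ₂'supp hP₁'dw hQ₂'lin))
      (lin_dw_bracket hP₂'supp hQ₁'supp hP₂'lin hQ₁'dw)
  · exact lin_bracket hP₂'supp hQ₂'supp hP₂'lin hQ₂'lin
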